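/- The product of generalized gcds satisfies Π_{j=1}^{n} (j,n)_b = Π_{d : d^b | n} d^{φ_b(n/d^b)}. -/

import Mathlib

noncomputable def ggcd (b r s : ℕ) : ℕ := sSup {d : ℕ | 0 < d ∧ d ^ b ∣ r ∧ d ^ b ∣ s}

noncomputable def klee (b n : ℕ) : ℕ :=
  ((Finset.Icc 1 n).filter (fun k => ggcd b k n = 1)).card

lemma gcd_pow_eq (a c n : ℕ) (ha : a ≠ 0) (hc : c ≠ 0) :
    Nat.gcd (a ^ n) (c ^ n) = Nat.gcd a c ^ n := by
  have han : (a ^ n) ≠ 0 := pow_ne_zero _ ha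
  have hcn : (c ^ n) ≠ 0 := pow_ne_zero _ hc
  have hg : Nat.gcd a c ≠ 0 := Nat.gcd_ne_zero_left ha
  have hgl : Nat.gcd (a ^ n) (c ^ n) ≠ 0 := Nat.gcd_ne_zero_left han
  apply Nat.dvd_antisymm
  · rw [← Nat.factorization_le_iff_dvd hgl (pow_ne_zero _ hg)]
    rw [Nat.factorization_gcd han hcn, Nat.factorization_pow, Nat.factorization_pow,
      Nat.factorization_pow, Nat.factorization_gcd ha hc]
    intro p
    simp only [Finsupp.inf_apply, Finsupp.smul_apply, smul_eq_mul]
    rcases le_total (a.factorization p) (c.factorization p) with hle | hle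
    · rw [inf_of_le_left hle, inf_of_le_left (Nat.mul_le_mul_left n hle)]
    · rw [inf_of_le_right hle, inf_of_le_right (Nat.mul_le_mul_left n hle)]
  · exact dvd_gcd (pow_dvd_pow_of_dvd (Nat.gcd_dvd_left a c) n)
      (pow_dvd_pow_of_dvd (Nat.gcd_dvd_right a c) n)

lemma lcm_pow_eq (a c n : ℕ) (ha : a ≠ 0) (hc : c ≠ 0) :
    Nat.lcm (a ^ n) (c ^ n) = Nat.lcm a c ^ n := by
  have h := Nat.gcd_mul_lcm (a ^ n) (c ^ n)
  have h2 := Nat.gcd_mul_lcm a c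
  rw [gcd_pow_eq a c n ha hc] at h
  have h3 : Nat.gcd a c ^ n * Nat.lcm (a ^ n) (c ^ n)
      = Nat.gcd a c ^ n * Nat.lcm a c ^ n := by
    rw [h, ← mul_pow, ← mul_pow, h2]
  exact Nat.eq_of_mul_eq_mul_left (pow_pos (Nat.pos_of_ne_zero (Nat.gcd_ne_zero_left ha)) n) h3

lemma ggcd_bddAbove (b r n : ℕ) (hb : 1 ≤ b) (hn : 0 < n) :
    BddAbove {d : ℕ | 0 < d ∧ d ^ b ∣ r ∧ d ^ b ∣ n} := by
  refine ⟨n, fun d hd => ?_⟩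
  exact Nat.le_of_dvd hn (dvd_trans (dvd_pow_self d (by omega)) hd.2.2)

lemma ggcd_spec (b r n : ℕ) (hb : 1 ≤ b) (hn : 0 < n) :
    0 < ggcd b r n ∧ (ggcd b r n) ^ b ∣ r ∧ (ggcd b r n) ^ b ∣ n := by
  have h1 : (1 : ℕ) ∈ {d : ℕ | 0 < d ∧ d ^ b ∣ r ∧ d ^ b ∣ n} := by simp
  exact Nat.sSup_mem ⟨1, h1⟩ (ggcd_bddAbove b r n hb hn)

lemma le_ggcd (b r n e : ℕ) (hb : 1 ≤ b) (hn : 0 < n) (he : 0 < e)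
    (h1 : e ^ b ∣ r) (h2 : e ^ b ∣ n) : e ≤ ggcd b r n :=
  le_csSup (ggcd_bddAbove b r n hb hn) ⟨he, h1, h2⟩

lemma ggcd_mul_eq_iff (b d k m : ℕ) (hb : 1 ≤ b) (hd : 0 < d) (hk : 0 < k) (hm : 0 < m) :
    ggcd b (d ^ b * k) (d ^ b * m) = d ↔ ggcd b k m = 1 := by
  have hdb : 0 < d ^ b * m := Nat.mul_pos (pow_pos hd b) hm
  constructor
  · intro h
    obtain ⟨he, hek, hem⟩ := ggcd_spec b k m hb hm
    set e := ggcd b k m with hedef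
    have hde : (d * e) ^ b ∣ d ^ b * k := by
      rw [mul_pow]; exact mul_dvd_mul_left _ hek
    have hde' : (d * e) ^ b ∣ d ^ b * m := by
      rw [mul_pow]; exact mul_dvd_mul_left _ hem
    have := le_ggcd b (d ^ b * k) (d ^ b * m) (d * e) hb hdb (Nat.mul_pos hd he) hde hde'
    rw [h] at this
    nlinarith
  · intro h
    obtain ⟨he, hek, hem⟩ := ggcd_spec b (d ^ b * k) (d ^ b * m) hb hdb
    set e := ggcd b (d ^ b * k) (d ^ b * m) with hedef
    have hde : d ≤ e :=
      le_ggcd b (d ^ b * k) (d ^ b * m) d hb hdb hd (Dvd.intro k rfl) (Dvd.intro m rfl)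
    set L := Nat.lcm d e with hL
    have hLpow : L ^ b = Nat.lcm (d ^ b) (e ^ b) := (lcm_pow_eq d e b hd.ne' he.ne').symm
    have hLk : L ^ b ∣ d ^ b * k := by
      rw [hLpow]; exact Nat.lcm_dvd (Dvd.intro k rfl) hek
    have hLm : L ^ b ∣ d ^ b * m := by
      rw [hLpow]; exact Nat.lcm_dvd (Dvd.intro m rfl) hem
    have hdL : d ∣ L := Nat.dvd_lcm_left d e
    obtain ⟨f, hf⟩ := hdL
    have hf0 : 0 < f := by
      rcases Nat.eq_zero_or_pos f with rfl | hf0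
      · exfalso; rw [Nat.mul_zero] at hf
        exact (Nat.lcm_ne_zero hd.ne' he.ne') hf
      · exact hf0
    have hLb : L ^ b = d ^ b * f ^ b := by rw [hf, mul_pow]
    have hfk : f ^ b ∣ k := by
      have := hLk; rw [hLb] at this
      exact (Nat.mul_dvd_mul_iff_left (pow_pos hd b)).mp this
    have hfm : f ^ b ∣ m := by
      have := hLm; rw [hLb] at this
      exact (Nat.mul_dvd_mul_iff_left (pow_pos hd b)).mp this
    have hf1 : f ≤ 1 := by
      have := le_ggcd b k m f hb hm hf0 hfk hfm
      rw [h] at this; exact this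
    have hfeq : f = 1 := le_antisymm hf1 hf0
    have hLd : L = d := by rw [hf, hfeq, Nat.mul_one]
    have heL : e ∣ L := Nat.dvd_lcm_right d e
    rw [hLd] at heL
    exact le_antisymm (Nat.le_of_dvd hd heL) hde

theorem prod_ggcd_eq (b n : ℕ) (hb : 2 ≤ b) (hn : 1 ≤ n) :
    ∏ j ∈ Finset.Icc 1 n, ggcd b j n =
      ∏ d ∈ (Finset.Icc 1 n).filter (fun d => d ^ b ∣ n),
        d ^ klee b (n / d ^ b) := by
  have hb1 : 1 ≤ b := by omega
  have hn0 : 0 < n := hn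
  rw [← Finset.prod_fiberwise_of_maps_to (g := fun j => ggcd b j n)
      (t := (Finset.Icc 1 n).filter (fun d => d ^ b ∣ n)) ?_ (fun j => ggcd b j n)]
  · apply Finset.prod_congr rfl
    intro d hd
    simp only [Finset.mem_filter, Finset.mem_Icc] at hd
    obtain ⟨⟨hd1, hdn⟩, hdvd⟩ := hd
    have hdpos : 0 < d := hd1
    have hdbpos : 0 < d ^ b := pow_pos hdpos b
    set m := n / d ^ b with hm
    have hnm : n = d ^ b * m := (Nat.mul_div_cancel' hdvd).symm
    have hm0 : 0 < m := by
      rcases Nat.eq_zero_or_pos m with h | h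
      · rw [h, Nat.mul_zero] at hnm; omega
      · exact h
    have hcard : ((Finset.Icc 1 n).filter (fun j => ggcd b j n = d)).card = klee b m := by
      rw [klee]
      apply Finset.card_nbij' (i := fun j => j / d ^ b) (j := fun k => d ^ b * k)
      · intro j hj
        simp only [Finset.mem_coe, Finset.mem_filter, Finset.mem_Icc] at hj ⊢
        obtain ⟨⟨hj1, hjn⟩, hjd⟩ := hj
        obtain ⟨-, hgj, -⟩ := ggcd_spec b j n hb1 hn0
        rw [hjd] at hgj
        obtain ⟨k, hk⟩ := hgj
        have hk0 : 0 < k := by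
          rcases Nat.eq_zero_or_pos k with h | h
          · rw [h, Nat.mul_zero] at hk; omega
          · exact h
        have hjdiv : j / d ^ b = k := by rw [hk, Nat.mul_div_cancel_left _ hdbpos]
        rw [hjdiv]
        refine ⟨⟨hk0, ?_⟩, ?_⟩
        · have : d ^ b * k ≤ d ^ b * m := by rw [← hk, ← hnm]; exact hjn
          exact Nat.le_of_mul_le_mul_left this hdbpos
        · rw [← ggcd_mul_eq_iff b d k m hb1 hdpos hk0 hm0, ← hk, ← hnm, hjd]
      · intro k hk
        simp only [Finset.mem_coe, Finset.mem_filter, Finset.mem_Icc] at hk ⊢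
        obtain ⟨⟨hk1, hkm⟩, hkg⟩ := hk
        refine ⟨⟨?_, ?_⟩, ?_⟩
        · exact Nat.one_le_iff_ne_zero.mpr (Nat.mul_ne_zero hdbpos.ne' (by omega))
        · rw [hnm]; exact Nat.mul_le_mul_left _ hkm
        · rw [hnm]; exact (ggcd_mul_eq_iff b d k m hb1 hdpos hk1 hm0).mpr hkg
      · intro j hj
        simp only [Finset.mem_coe, Finset.mem_filter, Finset.mem_Icc] at hj
        obtain ⟨-, hjd⟩ := hj
        obtain ⟨-, hgj, -⟩ := ggcd_spec b j n hb1 hn0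
        rw [hjd] at hgj
        exact Nat.mul_div_cancel' hgj
      · intro k hk
        exact Nat.mul_div_cancel_left _ hdbpos
    rw [← hcard]
    rw [Finset.prod_congr rfl (fun j hj => (Finset.mem_filter.mp hj).2), Finset.prod_const]
  · intro j hj
    simp only [Finset.mem_Icc] at hj
    obtain ⟨hg0, -, hgn⟩ := ggcd_spec b j n hb1 hn0
    simp only [Finset.mem_filter, Finset.mem_Icc]
    refine ⟨⟨hg0, ?_⟩, hgn⟩
    calc ggcd b j n ≤ ggcd b j n ^ b := Nat.le_self_pow (by omega) _
    _ ≤ n := Nat.le_of_dvd hn0 hgn
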